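/- The commutator 𝒮' = T_{P'} ∘ T_P ∘ T_{P'}⁻¹ ∘ T_P⁻¹ is a translation: for every Y ∈ ℝ², T_{P'}(T_P(T_{P'}⁻¹(T_P⁻¹(Y)))) = Y + (P' − T_P(P')). In particular 𝒮' translates in the direction of the line PP' by the vector P' − T_P(P'). -/

import Mathlib

noncomputable section

abbrev Pt := EuclideanSpace ℝ (Fin 2)

lemma aff3 (f : Pt →ᵃ[ℝ] Pt) (a b c : ℝ) (h : a + b + c = 1) (A B C : Pt) :
    f (a • A + b • B + c • C) = a • f A + b • f B + c • f C := by
  have h1 : a • A + b • B + c • C = (b • (B - A) + c • (C - A)) +ᵥ A := by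
    simp only [vadd_eq_add]
    match_scalars <;> linarith
  have h2 : f.linear (B - A) = f B - f A := by
    simpa [vsub_eq_sub] using f.linearMap_vsub B A
  have h3 : f.linear (C - A) = f C - f A := by
    simpa [vsub_eq_sub] using f.linearMap_vsub C A
  rw [h1, AffineMap.map_vadd, map_add, map_smul, map_smul, h2, h3]
  simp only [vadd_eq_add]
  match_scalars <;> linarith

lemma aff3e (f : Pt ≃ᵃ[ℝ] Pt) (a b c : ℝ) (h : a + b + c = 1) (A B C : Pt) :
    f (a • A + b • B + c • C) = a • f A + b • f B + c • f C :=
  aff3 f.toAffineMap a b c h A B C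

lemma ext3 (f g : Pt →ᵃ[ℝ] Pt) (A B C : Pt) (hABC : AffineIndependent ℝ ![A, B, C])
    (hA : f A = g A) (hB : f B = g B) (hC : f C = g C) : ∀ Z : Pt, f Z = g Z := by
  have hspan : affineSpan ℝ (Set.range ![A, B, C]) = ⊤ := by
    rw [hABC.affineSpan_eq_top_iff_card_eq_finrank_add_one]
    simp [finrank_euclideanSpace]
  intro Z
  have hZ : Z ∈ affineSpan ℝ (Set.range ![A, B, C]) := hspan ▸ AffineSubspace.mem_top ℝ _ Z
  obtain ⟨w, hw, rfl⟩ := eq_affineCombination_of_mem_affineSpan_of_fintype hZ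
  rw [Finset.map_affineCombination _ _ _ hw f, Finset.map_affineCombination _ _ _ hw g]
  have hfg : ⇑f ∘ ![A, B, C] = ⇑g ∘ ![A, B, C] := by
    funext i; fin_cases i <;> simpa
  rw [hfg]

set_option maxHeartbeats 4000000 in
theorem stmt8
    (A B C : Pt) (hABC : AffineIndependent ℝ ![A, B, C])
    (α β γ : ℝ) (hsum : α + β + γ = 1)
    (hα : α ≠ 0) (hβ : β ≠ 0) (hγ : γ ≠ 0)
    (hβγ : β + γ ≠ 0) (hγα : γ + α ≠ 0) (hαβ : α + β ≠ 0)
    (hs : α * β + β * γ + γ * α ≠ 0)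
    (P : Pt) (hP : P = α • A + β • B + γ • C)
    (P' : Pt)
    (hP'' : P' = (α * β + β * γ + γ * α)⁻¹ • ((β * γ) • A + (γ * α) • B + (α * β) • C))
    (D E F : Pt)
    (hD : D = (β + γ)⁻¹ • (β • B + γ • C))
    (hE : E = (γ + α)⁻¹ • (α • A + γ • C))
    (hF : F = (α + β)⁻¹ • (α • A + β • B))
    (D₃ E₃ F₃ : Pt)
    (hD₃ : D₃ = (β + γ)⁻¹ • (γ • B + β • C))
    (hE₃ : E₃ = (γ + α)⁻¹ • (γ • A + α • C))
    (hF₃ : F₃ = (α + β)⁻¹ • (β • A + α • B))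
    (TP : Pt ≃ᵃ[ℝ] Pt) (hTPA : TP A = D) (hTPB : TP B = E) (hTPC : TP C = F)
    (TP' : Pt ≃ᵃ[ℝ] Pt) (hTP'A : TP' A = D₃) (hTP'B : TP' B = E₃) (hTP'C : TP' C = F₃)
    :
    ∀ Y : Pt, TP' (TP (TP'.symm (TP.symm Y))) = Y + (P' - TP P') := by
  have hsD : (0:ℝ) + (β + γ)⁻¹ * β + (β + γ)⁻¹ * γ = 1 := by
    field_simp; ring_nf
  have hsE : (γ + α)⁻¹ * α + 0 + (γ + α)⁻¹ * γ = 1 := by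
    field_simp; ring
  have hsF : (α + β)⁻¹ * α + (α + β)⁻¹ * β + 0 = 1 := by
    field_simp; ring_nf
  have hsD₃ : (0:ℝ) + (β + γ)⁻¹ * γ + (β + γ)⁻¹ * β = 1 := by
    field_simp; ring
  have hsE₃ : (γ + α)⁻¹ * γ + 0 + (γ + α)⁻¹ * α = 1 := by
    field_simp; ring_nf
  have hsF₃ : (α + β)⁻¹ * β + (α + β)⁻¹ * α + 0 = 1 := by
    field_simp; ring
  have hsP' : (α * β + β * γ + γ * α)⁻¹ * (β * γ) + (α * β + β * γ + γ * α)⁻¹ * (γ * α)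
      + (α * β + β * γ + γ * α)⁻¹ * (α * β) = 1 := by
    rw [← mul_add, ← mul_add, inv_mul_eq_one₀ hs]; ring
  have hDrep : D = (0:ℝ) • A + ((β + γ)⁻¹ * β) • B + ((β + γ)⁻¹ * γ) • C := by
    rw [hD]; module
  have hErep : E = ((γ + α)⁻¹ * α) • A + (0:ℝ) • B + ((γ + α)⁻¹ * γ) • C := by
    rw [hE]; module
  have hFrep : F = ((α + β)⁻¹ * α) • A + ((α + β)⁻¹ * β) • B + (0:ℝ) • C := by
    rw [hF]; module
  have hD₃rep : D₃ = (0:ℝ) • A + ((β + γ)⁻¹ * γ) • B + ((β + γ)⁻¹ * β) • C := by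
    rw [hD₃]; module
  have hE₃rep : E₃ = ((γ + α)⁻¹ * γ) • A + (0:ℝ) • B + ((γ + α)⁻¹ * α) • C := by
    rw [hE₃]; module
  have hF₃rep : F₃ = ((α + β)⁻¹ * β) • A + ((α + β)⁻¹ * α) • B + (0:ℝ) • C := by
    rw [hF₃]; module
  have hP'rep : P' = ((α * β + β * γ + γ * α)⁻¹ * (β * γ)) • A
      + ((α * β + β * γ + γ * α)⁻¹ * (γ * α)) • B
      + ((α * β + β * γ + γ * α)⁻¹ * (α * β)) • C := by
    rw [hP'']; module
  have eTP'D : TP' D = (0:ℝ) • D₃ + ((β + γ)⁻¹ * β) • E₃ + ((β + γ)⁻¹ * γ) • F₃ := by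
    rw [hDrep, aff3e TP' _ _ _ hsD, hTP'A, hTP'B, hTP'C]
  have eTP'E : TP' E = ((γ + α)⁻¹ * α) • D₃ + (0:ℝ) • E₃ + ((γ + α)⁻¹ * γ) • F₃ := by
    rw [hErep, aff3e TP' _ _ _ hsE, hTP'A, hTP'B, hTP'C]
  have eTP'F : TP' F = ((α + β)⁻¹ * α) • D₃ + ((α + β)⁻¹ * β) • E₃ + (0:ℝ) • F₃ := by
    rw [hFrep, aff3e TP' _ _ _ hsF, hTP'A, hTP'B, hTP'C]
  have eTPD₃ : TP D₃ = (0:ℝ) • D + ((β + γ)⁻¹ * γ) • E + ((β + γ)⁻¹ * β) • F := by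
    rw [hD₃rep, aff3e TP _ _ _ hsD₃, hTPA, hTPB, hTPC]
  have eTPE₃ : TP E₃ = ((γ + α)⁻¹ * γ) • D + (0:ℝ) • E + ((γ + α)⁻¹ * α) • F := by
    rw [hE₃rep, aff3e TP _ _ _ hsE₃, hTPA, hTPB, hTPC]
  have eTPF₃ : TP F₃ = ((α + β)⁻¹ * β) • D + ((α + β)⁻¹ * α) • E + (0:ℝ) • F := by
    rw [hF₃rep, aff3e TP _ _ _ hsF₃, hTPA, hTPB, hTPC]
  have eTPP' : TP P' = ((α * β + β * γ + γ * α)⁻¹ * (β * γ)) • D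
      + ((α * β + β * γ + γ * α)⁻¹ * (γ * α)) • E
      + ((α * β + β * γ + γ * α)⁻¹ * (α * β)) • F := by
    rw [hP'rep, aff3e TP _ _ _ hsP', hTPA, hTPB, hTPC]
  have hs2 : β * (α + γ) + γ * α ≠ 0 := by
    intro h; apply hs; linear_combination h
  have hs3 : β * (α + γ) + α * γ ≠ 0 := by
    intro h; apply hs; linear_combination h
  have keyA : TP' (TP A) = (P' - TP P') + TP (TP' A) := by
    rw [hTPA, hTP'A, eTP'D, eTPD₃, eTPP', hP'rep, hD, hE, hF, hD₃, hE₃, hF₃]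
    match_scalars
    all_goals try field_simp
    all_goals ring
  have keyB : TP' (TP B) = (P' - TP P') + TP (TP' B) := by
    rw [hTPB, hTP'B, eTP'E, eTPE₃, eTPP', hP'rep, hD, hE, hF, hD₃, hE₃, hF₃]
    match_scalars
    all_goals try field_simp
    all_goals ring
  have keyC : TP' (TP C) = (P' - TP P') + TP (TP' C) := by
    rw [hTPC, hTP'C, eTP'F, eTPF₃, eTPP', hP'rep, hD, hE, hF, hD₃, hE₃, hF₃]
    match_scalars
    all_goals try field_simp
    all_goals ring
  have hall : ∀ Z : Pt, TP' (TP Z) = (P' - TP P') + TP (TP' Z) := by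
    have := ext3 (TP'.toAffineMap.comp TP.toAffineMap)
      ((AffineEquiv.constVAdd ℝ Pt (P' - TP P')).toAffineMap.comp
        (TP.toAffineMap.comp TP'.toAffineMap)) A B C hABC
      (by simpa only [AffineMap.comp_apply, AffineEquiv.coe_toAffineMap,
            AffineEquiv.constVAdd_apply, vadd_eq_add] using keyA)
      (by simpa only [AffineMap.comp_apply, AffineEquiv.coe_toAffineMap,
            AffineEquiv.constVAdd_apply, vadd_eq_add] using keyB)
      (by simpa only [AffineMap.comp_apply, AffineEquiv.coe_toAffineMap,
            AffineEquiv.constVAdd_apply, vadd_eq_add] using keyC)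
    intro Z
    simpa only [AffineMap.comp_apply, AffineEquiv.coe_toAffineMap,
      AffineEquiv.constVAdd_apply, vadd_eq_add] using this Z
  intro Y
  have h1 := hall (TP'.symm (TP.symm Y))
  rw [TP'.apply_symm_apply, TP.apply_symm_apply] at h1
  rw [h1]
  abel
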